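/- Every scattered topological space is a T_d-space: if X is scattered, then for every subset A ⊆ X the derived set d(A) is closed. -/

import Mathlib

open Topology


/-- A topological space is scattered if every nonempty subset has a point
isolated in it. -/
def IsScattered (X : Type*) [TopologicalSpace X] : Prop :=
  ∀ A : Set X, A.Nonempty → ∃ x ∈ A, ∃ U : Set X, IsOpen U ∧ U ∩ A = {x}

/-- Every scattered space is a `T_d`-space: all derived sets
are closed. -/
theorem scattered_isClosed_derivedSet {X : Type*} [TopologicalSpace X]
    (hX : IsScattered X) : ∀ A : Set X, IsClosed (derivedSet A) := by
  intro A
  rw [← isOpen_compl_iff, isOpen_iff_mem_nhds]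
  intro x hx
  rw [Set.mem_compl_iff, mem_derivedSet, accPt_iff_nhds] at hx
  push_neg at hx
  obtain ⟨U, hU, hUA⟩ := hx
  -- apply scatteredness to closure {x}
  obtain ⟨z, hz, V, hVopen, hV⟩ := hX (closure {x}) ⟨x, subset_closure rfl⟩
  have hzV : z ∈ V := by
    have : z ∈ V ∩ closure {x} := hV ▸ rfl
    exact this.1
  have hxV : x ∈ V := by
    rcases mem_closure_iff.mp hz V hVopen hzV with ⟨w, hw, hw'⟩
    rwa [Set.mem_singleton_iff.mp hw'] at hw
  -- the candidate neighborhood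
  have hW : interior U ∩ V ∈ 𝓝 x :=
    Filter.inter_mem (interior_mem_nhds.mpr hU) (hVopen.mem_nhds hxV)
  refine Filter.mem_of_superset hW ?_
  rintro y ⟨hyU, hyV⟩ hy
  have hyacc := accPt_iff_nhds.mp (mem_derivedSet.mp hy)
  have hWopen : IsOpen (interior U ∩ V) := isOpen_interior.inter hVopen
  -- y ∈ closure {x}
  have hycl : y ∈ closure ({x} : Set X) := by
    rw [mem_closure_iff]
    intro O hO hyO
    obtain ⟨w, ⟨hwO, hwA⟩, hwy⟩ := hyacc (O ∩ (interior U ∩ V))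
      ((hO.inter hWopen).mem_nhds ⟨hyO, hyU, hyV⟩)
    have : w = x := hUA w ⟨interior_subset hwO.2.1, hwA⟩
    exact ⟨w, hwO.1, this⟩
  have hyx : y = x := by
    have : y ∈ V ∩ closure {x} := ⟨hyV, hycl⟩
    rw [hV] at this
    have hzx : z = x := by
      have : x ∈ V ∩ closure {x} := ⟨hxV, subset_closure rfl⟩
      rw [hV] at this
      exact this.symm
    exact this.trans hzx
  obtain ⟨w, ⟨hwW, hwA⟩, hwy⟩ := hyacc (interior U ∩ V) (hWopen.mem_nhds ⟨hyU, hyV⟩)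
  exact hwy ((hUA w ⟨interior_subset hwW.1, hwA⟩).trans hyx.symm)
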